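/- Being D** is a Whitney property: if X is a D**-continuum, μ : C(X) → [0, μ(X)] is a Whitney map, and t ∈ (0, μ(X)), then the Whitney level μ⁻¹(t), regarded as a subspace of C(X) with the Hausdorff metric, is a D**-continuum. -/

import Mathlib

open TopologicalSpace

/-- A topological space is a *D**-space* if for every pair of disjoint nondegenerate
subcontinua `A, B` there is a subcontinuum `C` meeting both `A` and `B` with `B \ C ≠ ∅`. -/
def DStarStarSpace (X : Type*) [TopologicalSpace X] : Prop :=
  ∀ A B : Set X, IsCompact A → IsConnected A → A.Nontrivial →
    IsCompact B → IsConnected B → B.Nontrivial → Disjoint A B →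
    ∃ C : Set X, IsCompact C ∧ IsConnected C ∧
      (A ∩ C).Nonempty ∧ (B ∩ C).Nonempty ∧ (B \ C).Nonempty

/-- The hyperspace `C(X)` of all subcontinua of `X`, i.e. nonempty compact connected
subsets, with the Hausdorff metric. -/
abbrev Hyperspace (X : Type*) [MetricSpace X] : Type _ :=
  {K : NonemptyCompacts X // IsConnected (K : Set X)}

namespace DSS

open Set Metric Filter Topology

set_option linter.unusedSectionVars false

variable {X : Type*} [MetricSpace X] [CompactSpace X]

noncomputable section

/-- carrier of an element of the hyperspace -/
def car (A : Hyperspace X) : Set X := (A.1 : Set X)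

lemma car_nonempty (A : Hyperspace X) : (car A).Nonempty := A.1.nonempty

lemma car_compact (A : Hyperspace X) : IsCompact (car A) := A.1.isCompact

lemma car_connected (A : Hyperspace X) : IsConnected (car A) := A.2

lemma car_closed (A : Hyperspace X) : IsClosed (car A) := (car_compact A).isClosed

lemma set_bounded (s : Set X) : Bornology.IsBounded s :=
  isCompact_univ.isBounded.subset (Set.subset_univ s)

lemma hE_ne_top {s t : Set X} (hs : s.Nonempty) (ht : t.Nonempty) :
    EMetric.hausdorffEdist s t ≠ ⊤ :=
  Metric.hausdorffEdist_ne_top_of_nonempty_of_bounded hs ht (set_bounded s) (set_bounded t)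

/-- build an element of the hyperspace -/
def mkH (s : Set X) (hc : IsCompact s) (hcn : IsConnected s) : Hyperspace X :=
  ⟨⟨⟨s, hc⟩, hcn.nonempty⟩, hcn⟩

@[simp] lemma car_mkH (s : Set X) (hc : IsCompact s) (hcn : IsConnected s) :
    car (mkH s hc hcn) = s := rfl

lemma hs_ext {A B : Hyperspace X} (h : car A = car B) : A = B :=
  Subtype.ext (NonemptyCompacts.ext h)

lemma mkH_self (A : Hyperspace X) : mkH (car A) (car_compact A) (car_connected A) = A :=
  hs_ext rfl

lemma dist_eq_hD (A B : Hyperspace X) :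
    dist A B = hausdorffDist (car A) (car B) := by
  rw [Subtype.dist_eq, NonemptyCompacts.dist_eq]; rfl

lemma infDist_car_le {A B : Hyperspace X} {x : X} (hx : x ∈ car A) :
    infDist x (car B) ≤ dist A B := by
  rw [dist_eq_hD]
  exact infDist_le_hausdorffDist_of_mem hx (hE_ne_top (car_nonempty A) (car_nonempty B))

lemma mem_car_of_infDist_zero {A : Hyperspace X} {x : X} (h : infDist x (car A) = 0) :
    x ∈ car A :=
  ((car_closed A).mem_iff_infDist_zero (car_nonempty A)).2 h

/-- membership limit lemma -/
lemma mem_car_lim {A : ℕ → Hyperspace X} {A' : Hyperspace X}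
    (hA : Tendsto A atTop (nhds A')) {x : ℕ → X} {x' : X}
    (hx : Tendsto x atTop (nhds x')) (hmem : ∀ n, x n ∈ car (A n)) :
    x' ∈ car A' := by
  apply mem_car_of_infDist_zero
  have hb : ∀ n, infDist x' (car A') ≤ dist x' (x n) + dist (A n) A' := by
    intro n
    calc infDist x' (car A') ≤ infDist (x n) (car A') + dist x' (x n) :=
          infDist_le_infDist_add_dist
      _ ≤ dist (A n) A' + dist x' (x n) := by
          gcongr
          exact infDist_car_le (hmem n)
      _ = dist x' (x n) + dist (A n) A' := by ring
  have h1 : Tendsto (fun n => dist x' (x n) + dist (A n) A') atTop (nhds 0) := by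
    have := (tendsto_iff_dist_tendsto_zero.1 hx).add (tendsto_iff_dist_tendsto_zero.1 hA)
    simpa [dist_comm] using this
  have hle : infDist x' (car A') ≤ 0 := ge_of_tendsto h1 (Eventually.of_forall hb)
  exact le_antisymm hle infDist_nonneg

/-- subset limit lemma -/
lemma car_subset_lim {A B : ℕ → Hyperspace X} {A' B' : Hyperspace X}
    (hA : Tendsto A atTop (nhds A')) (hB : Tendsto B atTop (nhds B'))
    (hsub : ∀ n, car (A n) ⊆ car (B n)) : car A' ⊆ car B' := by
  intro x hx
  apply mem_car_of_infDist_zero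
  have hb : ∀ n, infDist x (car B') ≤ dist A' (A n) + dist (B n) B' := by
    intro n
    calc infDist x (car B') ≤ infDist x (car (B n)) + hausdorffDist (car (B n)) (car B') :=
          infDist_le_infDist_add_hausdorffDist
            (hE_ne_top (car_nonempty (B n)) (car_nonempty B'))
      _ ≤ infDist x (car (A n)) + dist (B n) B' := by
          rw [← dist_eq_hD]
          gcongr
          exact infDist_le_infDist_of_subset (hsub n) (car_nonempty (A n))
      _ ≤ dist A' (A n) + dist (B n) B' := by
          gcongr
          exact infDist_car_le hx
  have h1 : Tendsto (fun n => dist A' (A n) + dist (B n) B') atTop (nhds 0) := by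
    have h2 : Tendsto (fun n => dist A' (A n)) atTop (nhds 0) := by
      simpa [dist_comm] using tendsto_iff_dist_tendsto_zero.1 hA
    simpa using h2.add (tendsto_iff_dist_tendsto_zero.1 hB)
  have hle : infDist x (car B') ≤ 0 := ge_of_tendsto h1 (Eventually.of_forall hb)
  exact le_antisymm hle infDist_nonneg

lemma isClosed_carSub {Z : Set X} (hZ : IsClosed Z) :
    IsClosed {A : Hyperspace X | car A ⊆ Z} := by
  apply IsSeqClosed.isClosed
  intro A A' hmem hconv x hx
  have hZne : Z.Nonempty := (car_nonempty (A 0)).mono (hmem 0)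
  rw [hZ.mem_iff_infDist_zero hZne]
  have hb : ∀ n, infDist x Z ≤ dist A' (A n) := by
    intro n
    calc infDist x Z ≤ infDist x (car (A n)) :=
          infDist_le_infDist_of_subset (hmem n) (car_nonempty (A n))
      _ ≤ dist A' (A n) := infDist_car_le hx
  have h1 : Tendsto (fun n => dist A' (A n)) atTop (nhds 0) := by
    simpa [dist_comm] using tendsto_iff_dist_tendsto_zero.1 hconv
  have hle : infDist x Z ≤ 0 := ge_of_tendsto h1 (Eventually.of_forall hb)
  exact le_antisymm hle infDist_nonneg

lemma isClosed_carSup (F : Set X) :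
    IsClosed {A : Hyperspace X | F ⊆ car A} := by
  apply IsSeqClosed.isClosed
  intro A A' hmem hconv x hx
  exact mem_car_lim hconv tendsto_const_nhds (fun n => hmem n hx)

lemma isClosed_connected_nc :
    IsClosed {K : NonemptyCompacts X | IsConnected (K : Set X)} := by
  apply IsSeqClosed.isClosed
  intro K K' hmem hconv
  refine ⟨K'.nonempty, ?_⟩
  rw [isPreconnected_closed_iff]
  by_contra hpc
  push_neg at hpc
  obtain ⟨t₁, t₂, h₁, h₂, hcov, ⟨x₁, hx₁K, hx₁⟩, ⟨x₂, hx₂K, hx₂⟩, hint⟩ := hpc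
  set S : Set X := (K' : Set X) ∩ t₁ with hS
  set T : Set X := (K' : Set X) ∩ t₂ with hT
  have hSc : IsCompact S := K'.isCompact.inter_right h₁
  have hTc : IsCompact T := K'.isCompact.inter_right h₂
  have hSne : S.Nonempty := ⟨x₁, hx₁K, hx₁⟩
  have hTne : T.Nonempty := ⟨x₂, hx₂K, hx₂⟩
  have hdisj : ∀ y ∈ S, y ∉ T := by
    intro y hyS hyT
    have hy : y ∈ (K' : Set X) ∩ (t₁ ∩ t₂) := ⟨hyS.1, hyS.2, hyT.2⟩
    rw [hint] at hy
    exact hy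
  obtain ⟨x₀, hx₀S, hx₀min⟩ := hSc.exists_isMinOn hSne ((continuous_infDist_pt T).continuousOn)
  set δ : ℝ := infDist x₀ T with hδdef
  have hδ : 0 < δ := (hTc.isClosed.notMem_iff_infDist_pos hTne).1 (hdisj x₀ hx₀S)
  obtain ⟨N, hN⟩ := (Metric.tendsto_atTop.1 hconv) (δ/3) (by positivity)
  have hdistn : dist (K N) K' < δ/3 := hN N le_rfl
  have hDeq : hausdorffDist (K N : Set X) (K' : Set X) = dist (K N) K' :=
    NonemptyCompacts.dist_eq.symm
  set U : Set X := thickening (δ/3) S with hU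
  set V : Set X := thickening (δ/3) T with hV
  have hfinKK : EMetric.hausdorffEdist (K N : Set X) (K' : Set X) ≠ ⊤ :=
    hE_ne_top (K N).nonempty K'.nonempty
  have hKU : (K N : Set X) ⊆ U ∪ V := by
    intro x hx
    have h1 : infDist x (K' : Set X) < δ/3 := by
      calc infDist x (K' : Set X) ≤ hausdorffDist (K N : Set X) (K' : Set X) :=
            infDist_le_hausdorffDist_of_mem hx hfinKK
        _ < δ/3 := by rw [hDeq]; exact hdistn
    obtain ⟨y, hyK', hxy⟩ := (infDist_lt_iff K'.nonempty).1 h1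
    rcases hcov hyK' with hy1 | hy2
    · exact Or.inl (mem_thickening_iff.2 ⟨y, ⟨hyK', hy1⟩, hxy⟩)
    · exact Or.inr (mem_thickening_iff.2 ⟨y, ⟨hyK', hy2⟩, hxy⟩)
  have hmeet : ∀ y ∈ (K' : Set X), ∃ z ∈ (K N : Set X), dist z y < δ/3 := by
    intro y hy
    have h1 : infDist y (K N : Set X) < δ/3 := by
      calc infDist y (K N : Set X) ≤ hausdorffDist (K' : Set X) (K N : Set X) :=
            infDist_le_hausdorffDist_of_mem hy (hE_ne_top K'.nonempty (K N).nonempty)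
        _ < δ/3 := by rw [hausdorffDist_comm, hDeq]; exact hdistn
    obtain ⟨z, hz, hzy⟩ := (infDist_lt_iff (K N).nonempty).1 h1
    exact ⟨z, hz, by rwa [dist_comm]⟩
  obtain ⟨z₁, hz₁K, hz₁⟩ := hmeet x₁ hx₁K
  obtain ⟨z₂, hz₂K, hz₂⟩ := hmeet x₂ hx₂K
  have hKUne : ((K N : Set X) ∩ U).Nonempty :=
    ⟨z₁, hz₁K, mem_thickening_iff.2 ⟨x₁, ⟨hx₁K, hx₁⟩, hz₁⟩⟩
  have hKVne : ((K N : Set X) ∩ V).Nonempty :=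
    ⟨z₂, hz₂K, mem_thickening_iff.2 ⟨x₂, ⟨hx₂K, hx₂⟩, hz₂⟩⟩
  obtain ⟨y, _, hyU, hyV⟩ :=
    (hmem N).2 U V isOpen_thickening isOpen_thickening hKU hKUne hKVne
  obtain ⟨s, hsS, hys⟩ := mem_thickening_iff.1 hyU
  obtain ⟨t', htT, hyt⟩ := mem_thickening_iff.1 hyV
  have h1 : δ ≤ infDist s T := hx₀min hsS
  have h2 : infDist s T ≤ dist s t' := infDist_le_dist_of_mem htT
  have h3 : dist s t' ≤ dist s y + dist y t' := dist_triangle s y t'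
  have hys' : dist s y < δ/3 := by rw [dist_comm]; exact hys
  have : δ < δ := by
    calc δ ≤ dist s y + dist y t' := le_trans h1 (le_trans h2 h3)
      _ < δ/3 + δ/3 := add_lt_add hys' hyt
      _ < δ := by linarith
  exact lt_irrefl _ this

instance : CompactSpace (Hyperspace X) :=
  isCompact_iff_compactSpace.mp (isClosed_connected_nc (X := X)).isCompact

/-- abstract boundary bumping -/
lemma bump₀ {Y : Type*} [TopologicalSpace Y] [T2Space Y] [CompactSpace Y] [ConnectedSpace Y]
    {K : Set Y} (hK : IsClosed K) (hKne : K ≠ univ) {x : Y} (hx : x ∈ K) :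
    (connectedComponentIn K x ∩ frontier K).Nonempty := by
  by_contra hdis
  rw [not_nonempty_iff_eq_empty] at hdis
  haveI : CompactSpace K := isCompact_iff_compactSpace.mp hK.isCompact
  set x' : K := ⟨x, hx⟩ with hx'
  have hcc : connectedComponentIn K x = (↑) '' connectedComponent x' :=
    connectedComponentIn_eq_image hx
  have hiInter := connectedComponent_eq_iInter_isClopen x'
  set Fr : Set K := ((↑) : K → Y) ⁻¹' frontier K with hFr
  have hFrc : IsCompact Fr :=
    (isClosed_frontier.preimage continuous_subtype_val).isCompact
  have hdis' : (Fr ∩ ⋂ (Z : { Z : Set K // IsClopen Z ∧ x' ∈ Z }), ↑Z) = ∅ := by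
    rw [← hiInter]
    ext z
    simp only [mem_inter_iff, mem_empty_iff_false, iff_false, not_and]
    intro hzFr hzC
    have : (z : Y) ∈ connectedComponentIn K x ∩ frontier K :=
      ⟨hcc ▸ ⟨z, hzC, rfl⟩, hzFr⟩
    rw [hdis] at this
    exact this
  obtain ⟨u, hu⟩ := hFrc.elim_finite_subfamily_closed
    (fun Z : { Z : Set K // IsClopen Z ∧ x' ∈ Z } => (Z : Set K))
    (fun Z => Z.2.1.1) hdis'
  set V : Set K := ⋂ Z ∈ u, (Z : Set K) with hVdef
  have hVclopen : IsClopen V := isClopen_biInter_finset (fun Z _ => Z.2.1)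
  have hxV : x' ∈ V := mem_iInter₂.2 fun Z _ => Z.2.2
  have hVFr : V ∩ Fr = ∅ := by
    rw [inter_comm] at hu
    exact hu
  set V' : Set Y := ((↑) : K → Y) '' V with hV'
  have hV'K : V' ⊆ K := by rintro y ⟨z, _, rfl⟩; exact z.2
  have hV'Fr : V' ∩ frontier K = ∅ := by
    ext y
    simp only [mem_inter_iff, mem_empty_iff_false, iff_false, not_and]
    rintro ⟨z, hzV, rfl⟩ hyFr
    have : z ∈ V ∩ Fr := ⟨hzV, hyFr⟩
    rw [hVFr] at this
    exact this
  have hV'int : V' ⊆ interior K := by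
    intro y hy
    have h1 : y ∈ K := hV'K hy
    have h2 : y ∉ frontier K := fun hf => by
      have : y ∈ V' ∩ frontier K := ⟨hy, hf⟩
      rw [hV'Fr] at this; exact this
    rw [hK.frontier_eq] at h2
    by_contra hint
    exact h2 ⟨h1, hint⟩
  have hV'closed : IsClosed V' := by
    have : IsCompact V' := (hVclopen.1.isCompact).image continuous_subtype_val
    exact this.isClosed
  have hV'open : IsOpen V' := by
    obtain ⟨W, hW, hWV⟩ := isOpen_induced_iff.1 hVclopen.2
    have heq : V' = W ∩ interior K := by
      apply Subset.antisymm
      · intro y hy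
        refine ⟨?_, hV'int hy⟩
        obtain ⟨z, hzV, rfl⟩ := hy
        have : z ∈ ((↑) : K → Y) ⁻¹' W := by rw [hWV]; exact hzV
        exact this
      · rintro y ⟨hyW, hyint⟩
        have hyK : y ∈ K := interior_subset hyint
        refine ⟨⟨y, hyK⟩, ?_, rfl⟩
        rw [← hWV]
        exact hyW
    rw [heq]
    exact hW.inter isOpen_interior
  have : V' = univ := IsClopen.eq_univ ⟨hV'closed, hV'open⟩ ⟨x, ⟨x', hxV, rfl⟩⟩
  exact hKne (Subset.antisymm (subset_univ K) (this ▸ hV'K))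

/-- metric boundary bumping: enlarge a proper subcontinuum slightly -/
lemma bump {Z C₀ : Set X} (hZc : IsCompact Z) (hZconn : IsConnected Z)
    (hCc : IsCompact C₀) (hCconn : IsConnected C₀) (hsub : C₀ ⊆ Z) (hne : C₀ ≠ Z)
    {ε : ℝ} (hε : 0 < ε) :
    ∃ C' : Set X, IsCompact C' ∧ IsConnected C' ∧ C₀ ⊆ C' ∧ C' ⊆ Z ∧ C₀ ≠ C' ∧
      hausdorffDist C' C₀ ≤ ε := by
  obtain ⟨z, hzZ, hzC⟩ := exists_of_ssubset (ssubset_of_subset_of_ne hsub hne)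
  have hr : 0 < infDist z C₀ := (hCc.isClosed.notMem_iff_infDist_pos hCconn.nonempty).1 hzC
  set ε' : ℝ := min ε (infDist z C₀ / 2) with hε'def
  have hε' : 0 < ε' := lt_min hε (by positivity)
  haveI : CompactSpace Z := isCompact_iff_compactSpace.mp hZc
  haveI : ConnectedSpace Z := Subtype.connectedSpace hZconn
  set g : Z → ℝ := fun y => infDist (y : X) C₀ with hg
  have hgc : Continuous g := (continuous_infDist_pt C₀).comp continuous_subtype_val
  set K : Set Z := {y | g y ≤ ε'} with hKdef
  have hKcl : IsClosed K := isClosed_le hgc continuous_const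
  have hKne : K ≠ univ := by
    intro h
    have h1 : (⟨z, hzZ⟩ : Z) ∈ K := h ▸ mem_univ _
    have h2 : infDist z C₀ ≤ ε' := h1
    have h3 : ε' ≤ infDist z C₀ / 2 := min_le_right _ _
    linarith
  obtain ⟨x₀, hx₀⟩ := hCconn.nonempty
  have hx₀Z : x₀ ∈ Z := hsub hx₀
  have hx₀K : (⟨x₀, hx₀Z⟩ : Z) ∈ K := by
    show infDist x₀ C₀ ≤ ε'
    rw [infDist_zero_of_mem hx₀]
    exact hε'.le
  set C₀' : Set Z := ((↑) : Z → X) ⁻¹' C₀ with hC₀'def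
  have hC₀'img : ((↑) : Z → X) '' C₀' = C₀ := by
    rw [Subtype.image_preimage_coe]
    exact inter_eq_self_of_subset_right hsub
  have hC₀'conn : IsPreconnected C₀' := by
    have hiff := IsInducing.subtypeVal.isPreconnected_image (s := C₀')
    rw [hC₀'img] at hiff
    exact hiff.1 hCconn.isPreconnected
  have hC₀'K : C₀' ⊆ K := by
    intro y hy
    have hy' : (y : X) ∈ C₀ := hy
    show infDist (y : X) C₀ ≤ ε'
    rw [infDist_zero_of_mem hy']
    exact hε'.le
  have hx₀C₀' : (⟨x₀, hx₀Z⟩ : Z) ∈ C₀' := hx₀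
  have hsubQ : C₀' ⊆ connectedComponentIn K ⟨x₀, hx₀Z⟩ :=
    hC₀'conn.subset_connectedComponentIn hx₀C₀' hC₀'K
  obtain ⟨w, hwQ, hwFr⟩ := bump₀ hKcl hKne hx₀K
  set Q := connectedComponentIn K (⟨x₀, hx₀Z⟩ : Z) with hQdef
  set C' : Set X := ((↑) : Z → X) '' closure Q with hC'def
  have hQK : closure Q ⊆ K := hKcl.closure_subset_iff.2 (connectedComponentIn_subset K _)
  have hC'c : IsCompact C' := isClosed_closure.isCompact.image continuous_subtype_val
  have hC'conn : IsConnected C' := by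
    refine ⟨⟨x₀, ⟨⟨x₀, hx₀Z⟩, subset_closure (hsubQ hx₀C₀'), rfl⟩⟩, ?_⟩
    exact (isPreconnected_connectedComponentIn.closure).image _
      continuous_subtype_val.continuousOn
  have hC₀C' : C₀ ⊆ C' := by
    rw [← hC₀'img]
    exact image_mono (hsubQ.trans subset_closure)
  have hC'Z : C' ⊆ Z := by rintro y ⟨u, _, rfl⟩; exact u.2
  have hwC' : (w : X) ∈ C' := ⟨w, subset_closure hwQ, rfl⟩
  have hwdist : infDist (w : X) C₀ = ε' :=
    frontier_le_subset_eq hgc continuous_const hwFr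
  have hwnotC₀ : (w : X) ∉ C₀ := by
    intro hmem
    rw [infDist_zero_of_mem hmem] at hwdist
    linarith
  have hne' : C₀ ≠ C' := fun h => hwnotC₀ (h ▸ hwC')
  have hdist : hausdorffDist C' C₀ ≤ ε := by
    apply hausdorffDist_le_of_infDist hε.le
    · rintro y ⟨u, huQ, rfl⟩
      have h1 : infDist (u : X) C₀ ≤ ε' := hQK huQ
      exact h1.trans (min_le_left _ _)
    · intro y hy
      rw [infDist_zero_of_mem (hC₀C' hy)]
      exact hε.le
  exact ⟨C', hC'c, hC'conn, hC₀C', hC'Z, hne', hdist⟩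

/-- generic "flow towards a base family" connectedness criterion -/
lemma connected_of_flow (f : Hyperspace X → ℝ) (hf : Continuous f)
    {s s₀ : Set (Hyperspace X)} (hs : IsCompact s) (hsub : s₀ ⊆ s)
    (hconn₀ : IsPreconnected s₀) (hne₀ : s₀.Nonempty)
    (key : ∀ A ∈ s, A ∉ s₀ → ∀ ε > 0, ∃ B ∈ s, dist B A < ε ∧ f B < f A) :
    IsPreconnected s := by
  by_contra hnc
  unfold IsPreconnected at hnc
  push_neg at hnc
  obtain ⟨u, v, hu, hv, hcov, hsu, hsv, hint⟩ := hnc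
  have core : ∀ u' v' : Set (Hyperspace X), IsOpen u' → IsOpen v' → s ⊆ u' ∪ v' →
      s ∩ (u' ∩ v') = ∅ → (s ∩ v').Nonempty → s₀ ∩ v' = ∅ → False := by
    intro u' v' hu' hv' hcov' hint' hsv' hs₀v'
    have hQeq : s ∩ v' = s \ u' := by
      ext A
      constructor
      · rintro ⟨hAs, hAv⟩
        refine ⟨hAs, fun hAu => ?_⟩
        have hAm : A ∈ s ∩ (u' ∩ v') := ⟨hAs, hAu, hAv⟩
        rw [hint'] at hAm
        exact hAm
      · rintro ⟨hAs, hAu⟩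
        rcases hcov' hAs with h | h
        · exact absurd h hAu
        · exact ⟨hAs, h⟩
    have hQc : IsCompact (s ∩ v') := by rw [hQeq]; exact hs.diff hu'
    obtain ⟨A, hAQ, hAmin⟩ := hQc.exists_isMinOn hsv' hf.continuousOn
    have hAs₀ : A ∉ s₀ := by
      intro h
      have hAm : A ∈ s₀ ∩ v' := ⟨h, hAQ.2⟩
      rw [hs₀v'] at hAm
      exact hAm
    obtain ⟨ε, hε, hball⟩ := Metric.isOpen_iff.1 hv' A hAQ.2
    obtain ⟨B, hBs, hBd, hBf⟩ := key A hAQ.1 hAs₀ ε hε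
    have hBv : B ∈ v' := hball (mem_ball.mpr hBd)
    exact absurd (isMinOn_iff.1 hAmin B ⟨hBs, hBv⟩) (not_le.mpr hBf)
  have hs₀sub : s₀ ⊆ u ∪ v := hsub.trans hcov
  by_cases hc : (s₀ ∩ u).Nonempty ∧ (s₀ ∩ v).Nonempty
  · obtain ⟨A, hA⟩ := hconn₀ u v hu hv hs₀sub hc.1 hc.2
    have hAm : A ∈ s ∩ (u ∩ v) := ⟨hsub hA.1, hA.2⟩
    rw [hint] at hAm
    exact hAm
  · rw [not_and_or] at hc
    rcases hc with hc | hc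
    · rw [not_nonempty_iff_eq_empty] at hc
      exact core v u hv hu (by rwa [union_comm]) (by rw [inter_comm v u]; exact hint) hsu hc
    · rw [not_nonempty_iff_eq_empty] at hc
      exact core u v hu hv hcov hint hsv hc

section Mu

variable {μ : Hyperspace X → ℝ}

/-- the family of subcontinua of `Z` containing `F` -/
def blockCC (F Z : Set X) : Set (Hyperspace X) :=
  {A : Hyperspace X | F ⊆ car A} ∩ {A : Hyperspace X | car A ⊆ Z}

lemma isClosed_blockCC (F : Set X) {Z : Set X} (hZ : IsClosed Z) :
    IsClosed (blockCC (X := X) F Z) :=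
  (isClosed_carSup F).inter (isClosed_carSub hZ)

lemma mem_blockCC {F Z : Set X} {A : Hyperspace X} :
    A ∈ blockCC F Z ↔ F ⊆ car A ∧ car A ⊆ Z := Iff.rfl

lemma mono_le (hμmono : ∀ A B : Hyperspace X, (A.1 : Set X) ⊂ (B.1 : Set X) → μ A < μ B)
    {A B : Hyperspace X} (h : car A ⊆ car B) : μ A ≤ μ B := by
  rcases Set.eq_or_ssubset_of_subset h with he | hss
  · rw [hs_ext he]
  · exact (hμmono A B hss).le

lemma eq_of_sub_mu_eq (hμmono : ∀ A B : Hyperspace X, (A.1 : Set X) ⊂ (B.1 : Set X) → μ A < μ B)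
    {A B : Hyperspace X} (h : car A ⊆ car B) (he : μ A = μ B) : A = B := by
  rcases Set.eq_or_ssubset_of_subset h with h2 | hss
  · exact hs_ext h2
  · exact absurd he (ne_of_lt (hμmono A B hss))

lemma blockCC_isConnected (hμcont : Continuous μ)
    (hμmono : ∀ A B : Hyperspace X, (A.1 : Set X) ⊂ (B.1 : Set X) → μ A < μ B)
    {F Z : Set X} (hZc : IsCompact Z) (hZconn : IsConnected Z) (hFZ : F ⊆ Z) :
    IsConnected (blockCC (X := X) F Z) := by
  set ZH := mkH Z hZc hZconn with hZH
  have hZmem : ZH ∈ blockCC F Z := ⟨hFZ, Subset.rfl⟩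
  refine ⟨⟨ZH, hZmem⟩, ?_⟩
  apply connected_of_flow (fun A => - μ A) hμcont.neg
    ((isClosed_blockCC F hZc.isClosed).isCompact)
    (singleton_subset_iff.2 hZmem) isPreconnected_singleton ⟨ZH, rfl⟩
  intro A hA hAne ε hε
  have hcarne : car A ≠ Z := by
    intro h
    exact hAne (mem_singleton_iff.2 (hs_ext (by rw [h]; rfl)))
  obtain ⟨C', hC'c, hC'conn, hsub', hsubZ, hne', hdist⟩ :=
    bump hZc hZconn (car_compact A) (car_connected A) hA.2 hcarne (half_pos hε)
  refine ⟨mkH C' hC'c hC'conn, ⟨hA.1.trans (by simpa [car_mkH] using hsub'),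
    by simpa [car_mkH] using hsubZ⟩, ?_, ?_⟩
  · rw [dist_eq_hD]
    simp only [car_mkH]
    calc hausdorffDist C' (car A) ≤ ε/2 := hdist
      _ < ε := half_lt_self hε
  · simp only [neg_lt_neg_iff]
    exact hμmono A (mkH C' hC'c hC'conn) (ssubset_of_subset_of_ne hsub' hne')

lemma blockCC_ivt (hμcont : Continuous μ)
    (hμmono : ∀ A B : Hyperspace X, (A.1 : Set X) ⊂ (B.1 : Set X) → μ A < μ B)
    {Z : Set X} (hZc : IsCompact Z) (hZconn : IsConnected Z)
    {A₀ : Hyperspace X} (hA₀ : car A₀ ⊆ Z) {s : ℝ}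
    (h1 : μ A₀ ≤ s) (h2 : s ≤ μ (mkH Z hZc hZconn)) :
    ∃ M : Hyperspace X, car A₀ ⊆ car M ∧ car M ⊆ Z ∧ μ M = s := by
  have hconn := blockCC_isConnected hμcont hμmono (F := car A₀) hZc hZconn hA₀
  have himg : IsPreconnected (μ '' blockCC (car A₀) Z) :=
    hconn.isPreconnected.image μ hμcont.continuousOn
  have hmemA : μ A₀ ∈ μ '' blockCC (car A₀) Z := ⟨A₀, ⟨Subset.rfl, hA₀⟩, rfl⟩
  have hmemZ : μ (mkH Z hZc hZconn) ∈ μ '' blockCC (car A₀) Z :=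
    ⟨mkH Z hZc hZconn, ⟨by simpa [car_mkH] using hA₀, by simp [car_mkH]⟩, rfl⟩
  obtain ⟨M, hM, hMs⟩ := himg.Icc_subset hmemA hmemZ ⟨h1, h2⟩
  exact ⟨M, hM.1, hM.2, hMs⟩

lemma growth_eps (hμcont : Continuous μ)
    (hμmono : ∀ A B : Hyperspace X, (A.1 : Set X) ⊂ (B.1 : Set X) → μ A < μ B)
    {F Z : Set X} (hFc : IsCompact F) (hFconn : IsConnected F)
    (hZc : IsCompact Z) (hZconn : IsConnected Z) (hFZ : F ⊆ Z) {ε : ℝ} (hε : 0 < ε) :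
    ∃ δ > (0:ℝ), ∀ s : ℝ, μ (mkH F hFc hFconn) ≤ s → s ≤ μ (mkH F hFc hFconn) + δ →
      s ≤ μ (mkH Z hZc hZconn) →
      ∃ M : Hyperspace X, F ⊆ car M ∧ car M ⊆ Z ∧ μ M = s ∧
        dist M (mkH F hFc hFconn) ≤ ε := by
  classical
  set FH := mkH F hFc hFconn with hFH
  set T : Set (Hyperspace X) := blockCC F Z ∩ {A | ε ≤ dist A FH} with hT
  have hTc : IsCompact T := by
    apply IsClosed.isCompact
    apply (isClosed_blockCC F hZc.isClosed).inter
    have : IsClosed {A : Hyperspace X | ε ≤ dist A FH} :=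
      isClosed_le continuous_const (continuous_id.dist continuous_const)
    exact this
  rcases T.eq_empty_or_nonempty with hTe | hTne
  · refine ⟨1, one_pos, fun s hs1 _ hs3 => ?_⟩
    obtain ⟨M, hM1, hM2, hM3⟩ := blockCC_ivt hμcont hμmono hZc hZconn
      (A₀ := FH) (by simpa [hFH, car_mkH] using hFZ) hs1 hs3
    refine ⟨M, by simpa [hFH, car_mkH] using hM1, hM2, hM3, ?_⟩
    by_contra hd
    have : M ∈ T := ⟨⟨by simpa [hFH, car_mkH] using hM1, hM2⟩, le_of_not_gt (fun h2 => hd h2.le)⟩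
    rw [hTe] at this
    exact this
  · obtain ⟨A₂, hA₂T, hA₂min⟩ := hTc.exists_isMinOn hTne hμcont.continuousOn
    have hFA₂ : F ⊆ car A₂ := hA₂T.1.1
    have hne : car FH ≠ car A₂ := by
      intro h
      have : A₂ = FH := (hs_ext h).symm
      rw [this] at hA₂T
      have := hA₂T.2
      simp only [mem_setOf_eq, dist_self] at this
      linarith
    have hlt : μ FH < μ A₂ :=
      hμmono FH A₂ (ssubset_of_subset_of_ne (show car FH ⊆ car A₂ from hFA₂) hne)
    refine ⟨(μ A₂ - μ FH)/2, by linarith, fun s hs1 hs2 hs3 => ?_⟩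
    obtain ⟨M, hM1, hM2, hM3⟩ := blockCC_ivt hμcont hμmono hZc hZconn
      (A₀ := FH) (by simpa [hFH, car_mkH] using hFZ) hs1 hs3
    refine ⟨M, by simpa [hFH, car_mkH] using hM1, hM2, hM3, ?_⟩
    by_contra hd
    have hMT : M ∈ T := ⟨⟨by simpa [hFH, car_mkH] using hM1, hM2⟩, le_of_not_gt (fun h2 => hd h2.le)⟩
    have := isMinOn_iff.1 hA₂min M hMT
    rw [hM3] at this
    linarith

lemma shrink (hμcont : Continuous μ)
    (hμmono : ∀ A B : Hyperspace X, (A.1 : Set X) ⊂ (B.1 : Set X) → μ A < μ B)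
    {F C₀ : Set X} (hFc : IsCompact F) (hFconn : IsConnected F)
    (hCc : IsCompact C₀) (hCconn : IsConnected C₀) (hsub : F ⊆ C₀) (hne : F ≠ C₀)
    {ε : ℝ} (hε : 0 < ε) :
    ∃ M : Hyperspace X, F ⊆ car M ∧ car M ⊆ C₀ ∧ car M ≠ C₀ ∧
      μ M < μ (mkH C₀ hCc hCconn) ∧ dist M (mkH C₀ hCc hCconn) < ε := by
  classical
  set CH := mkH C₀ hCc hCconn with hCH
  set FH := mkH F hFc hFconn with hFH
  have hμF : μ FH < μ CH :=
    hμmono FH CH (ssubset_of_subset_of_ne hsub hne)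
  set T : Set (Hyperspace X) := blockCC F C₀ ∩ {A | ε ≤ dist A CH} with hT
  have hTc : IsCompact T := by
    apply IsClosed.isCompact
    exact (isClosed_blockCC F hCc.isClosed).inter
      (isClosed_le continuous_const (continuous_id.dist continuous_const))
  have hget : ∀ s : ℝ, μ FH ≤ s → s < μ CH → (∀ B ∈ T, μ B < s) →
      ∃ M : Hyperspace X, F ⊆ car M ∧ car M ⊆ C₀ ∧ car M ≠ C₀ ∧
        μ M < μ CH ∧ dist M CH < ε := by
    intro s hs1 hs2 hanti
    obtain ⟨M, hM1, hM2, hM3⟩ := blockCC_ivt hμcont hμmono hCc hCconn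
      (A₀ := FH) (by simpa [hFH, car_mkH] using hsub) hs1 hs2.le
    have hMlt : μ M < μ CH := by rw [hM3]; exact hs2
    have hMne : car M ≠ C₀ := by
      intro h
      have hMC : M = CH := hs_ext h
      rw [hMC] at hMlt
      exact lt_irrefl _ hMlt
    have hMnotT : M ∉ T := by
      intro hMT
      have := hanti M hMT
      rw [hM3] at this
      exact lt_irrefl _ this
    have hMd : dist M CH < ε := by
      by_contra hd
      exact hMnotT ⟨⟨by simpa [hFH, car_mkH] using hM1, hM2⟩, le_of_not_gt hd⟩
    exact ⟨M, by simpa [hFH, car_mkH] using hM1, hM2, hMne, hMlt, hMd⟩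
  rcases T.eq_empty_or_nonempty with hTe | hTne
  · refine hget ((μ FH + μ CH)/2) (by linarith) (by linarith) ?_
    intro B hB
    rw [hTe] at hB
    exact absurd hB (notMem_empty B)
  · obtain ⟨A₃, hA₃T, hA₃max⟩ := hTc.exists_isMaxOn hTne hμcont.continuousOn
    have hA₃lt : μ A₃ < μ CH := by
      apply hμmono
      apply ssubset_of_subset_of_ne hA₃T.1.2
      intro h
      have hAC : A₃ = CH := hs_ext h
      rw [hAC] at hA₃T
      have h2 := hA₃T.2
      simp only [mem_setOf_eq, dist_self] at h2
      linarith
    set s : ℝ := (max (μ A₃) (μ FH) + μ CH)/2 with hs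
    have hmaxlt : max (μ A₃) (μ FH) < μ CH := max_lt hA₃lt hμF
    refine hget s (by
      have : μ FH ≤ max (μ A₃) (μ FH) := le_max_right _ _
      rw [hs]; linarith) (by rw [hs]; linarith) ?_
    intro B hB
    have h1 : μ B ≤ μ A₃ := isMaxOn_iff.1 hA₃max B hB
    have h2 : μ A₃ ≤ max (μ A₃) (μ FH) := le_max_left _ _
    rw [hs]
    linarith

/-- the singleton element of the hyperspace -/
def sigH (z : X) : Hyperspace X := mkH {z} isCompact_singleton isConnected_singleton

lemma sigH_lip : LipschitzWith 1 (sigH (X := X)) := by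
  apply LipschitzWith.of_dist_le_mul
  intro a b
  rw [dist_eq_hD]
  simp only [NNReal.coe_one, one_mul]
  apply hausdorffDist_le_of_infDist dist_nonneg
  · intro x hx
    have hx' : x = a := hx
    subst hx'
    rw [show car (sigH b) = {b} from rfl, infDist_singleton]
  · intro x hx
    have hx' : x = b := hx
    subst hx'
    rw [show car (sigH a) = {a} from rfl, infDist_singleton, dist_comm]

/-- subcontinua of `Z` containing `F` with `μ`-value `≤ t` -/
def lamF (μ : Hyperspace X → ℝ) (t : ℝ) (F Z : Set X) : Set (Hyperspace X) :=
  {A | μ A ≤ t} ∩ blockCC F Z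

/-- subcontinua of `Z` containing `F` with `μ`-value `= t` -/
def levelF (μ : Hyperspace X → ℝ) (t : ℝ) (F Z : Set X) : Set (Hyperspace X) :=
  {A | μ A = t} ∩ blockCC F Z

lemma isClosed_lamF (hμcont : Continuous μ) {t : ℝ} (F : Set X) {Z : Set X}
    (hZ : IsClosed Z) : IsClosed (lamF μ t F Z) :=
  (isClosed_le hμcont continuous_const).inter (isClosed_blockCC F hZ)

lemma isClosed_levelF (hμcont : Continuous μ) {t : ℝ} (F : Set X) {Z : Set X}
    (hZ : IsClosed Z) : IsClosed (levelF μ t F Z) :=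
  (isClosed_eq hμcont continuous_const).inter (isClosed_blockCC F hZ)

lemma lamF_preconn_floor (hμcont : Continuous μ)
    (hμmono : ∀ A B : Hyperspace X, (A.1 : Set X) ⊂ (B.1 : Set X) → μ A < μ B)
    {F Z : Set X} (hFc : IsCompact F) (hFconn : IsConnected F)
    (hZc : IsCompact Z) (hZconn : IsConnected Z) (hFZ : F ⊆ Z)
    {t : ℝ} (hFt : μ (mkH F hFc hFconn) ≤ t) :
    IsPreconnected (lamF μ t F Z) := by
  have hFmem : mkH F hFc hFconn ∈ lamF μ t F Z := ⟨hFt, Subset.rfl, hFZ⟩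
  apply connected_of_flow μ hμcont
    ((isClosed_lamF hμcont F hZc.isClosed).isCompact)
    (singleton_subset_iff.2 hFmem) isPreconnected_singleton ⟨_, rfl⟩
  intro A hA hAne ε hε
  have hFA : F ⊆ car A := hA.2.1
  have hFne : F ≠ car A := by
    intro h
    exact hAne (mem_singleton_iff.2 (hs_ext (show car (mkH F hFc hFconn) = car A from h)).symm)
  obtain ⟨M, hM1, hM2, hM3, hM4, hM5⟩ :=
    shrink hμcont hμmono hFc hFconn (car_compact A) (car_connected A) hFA hFne hε
  rw [mkH_self A] at hM4 hM5
  exact ⟨M, ⟨(lt_of_lt_of_le hM4 hA.1).le, hM1, hM2.trans hA.2.2⟩, hM5, hM4⟩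

lemma lam_preconn_empty (hμcont : Continuous μ)
    (hμ0 : ∀ A : Hyperspace X, (A.1 : Set X).Subsingleton → μ A = 0)
    (hμmono : ∀ A B : Hyperspace X, (A.1 : Set X) ⊂ (B.1 : Set X) → μ A < μ B)
    {Z : Set X} (hZc : IsCompact Z) (hZconn : IsConnected Z)
    {t : ℝ} (ht0 : 0 ≤ t) :
    IsPreconnected (lamF μ t (∅ : Set X) Z) := by
  have hs₀sub : sigH '' Z ⊆ lamF μ t (∅ : Set X) Z := by
    rintro _ ⟨z, hz, rfl⟩
    refine ⟨?_, empty_subset _, singleton_subset_iff.2 hz⟩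
    have h0 : μ (sigH z) = 0 := hμ0 _ (subsingleton_singleton)
    show μ (sigH z) ≤ t
    rw [h0]; exact ht0
  obtain ⟨z₀, hz₀⟩ := hZconn.nonempty
  apply connected_of_flow μ hμcont
    ((isClosed_lamF hμcont ∅ hZc.isClosed).isCompact) hs₀sub
    ((hZconn.isPreconnected).image _ (sigH_lip.continuous.continuousOn))
    ⟨sigH z₀, ⟨z₀, hz₀, rfl⟩⟩
  intro A hA hAne ε hε
  have hnt : (car A).Nontrivial := by
    obtain ⟨z, hz⟩ := car_nonempty A
    by_contra hns
    rw [Set.not_nontrivial_iff] at hns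
    have hcar : car A = {z} := hns.eq_singleton_of_mem hz
    exact hAne ⟨z, hA.2.2 hz, hs_ext (show car (sigH z) = car A by rw [hcar]; rfl)⟩
  obtain ⟨x, hx, y, hy, hxy⟩ := hnt
  have hsub1 : {x} ⊆ car A := singleton_subset_iff.2 hx
  have hne1 : {x} ≠ car A := by
    intro h
    rw [← h] at hy
    exact hxy (mem_singleton_iff.1 hy).symm
  obtain ⟨M, hM1, hM2, hM3, hM4, hM5⟩ :=
    shrink hμcont hμmono isCompact_singleton isConnected_singleton
      (car_compact A) (car_connected A) hsub1 hne1 hε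
  rw [mkH_self A] at hM4 hM5
  exact ⟨M, ⟨(lt_of_lt_of_le hM4 hA.1).le, empty_subset _, hM2.trans hA.2.2⟩, hM5, hM4⟩

/-- Master lemma: a Whitney level of subcontinua of a continuum `Z` (with floor `F`)
is preconnected, provided the corresponding sublevel family is preconnected. -/
lemma levelF_preconn (hμcont : Continuous μ)
    (hμmono : ∀ A B : Hyperspace X, (A.1 : Set X) ⊂ (B.1 : Set X) → μ A < μ B)
    {F Z : Set X} (hZc : IsCompact Z) (hZconn : IsConnected Z)
    {t : ℝ} (htZ : t ≤ μ (mkH Z hZc hZconn))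
    (hΛ : IsPreconnected (lamF μ t F Z)) :
    IsPreconnected (levelF μ t F Z) := by
  classical
  by_contra hnc
  unfold IsPreconnected at hnc
  push_neg at hnc
  obtain ⟨u, v, hu, hv, hcov, hsu, hsv, hint⟩ := hnc
  have hLclosed : IsClosed (levelF μ t F Z) := isClosed_levelF hμcont F hZc.isClosed
  have hΛclosed : IsClosed (lamF μ t F Z) := isClosed_lamF hμcont F hZc.isClosed
  have hHseq : levelF μ t F Z ∩ u = levelF μ t F Z \ v := by
    ext A
    constructor
    · rintro ⟨hAL, hAu⟩
      refine ⟨hAL, fun hAv => ?_⟩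
      have hAm : A ∈ levelF μ t F Z ∩ (u ∩ v) := ⟨hAL, hAu, hAv⟩
      rw [hint] at hAm
      exact hAm
    · rintro ⟨hAL, hAv⟩
      rcases hcov hAL with h | h
      · exact ⟨hAL, h⟩
      · exact absurd h hAv
  have hKseq : levelF μ t F Z ∩ v = levelF μ t F Z \ u := by
    ext A
    constructor
    · rintro ⟨hAL, hAv⟩
      refine ⟨hAL, fun hAu => ?_⟩
      have hAm : A ∈ levelF μ t F Z ∩ (u ∩ v) := ⟨hAL, hAu, hAv⟩
      rw [hint] at hAm
      exact hAm
    · rintro ⟨hAL, hAu⟩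
      rcases hcov hAL with h | h
      · exact absurd h hAu
      · exact ⟨hAL, h⟩
  have hHc : IsCompact (levelF μ t F Z ∩ u) := by
    rw [hHseq]; exact hLclosed.isCompact.diff hv
  have hKc : IsCompact (levelF μ t F Z ∩ v) := by
    rw [hKseq]; exact hLclosed.isCompact.diff hu
  have hupClosed : ∀ Ws : Set (Hyperspace X), IsCompact Ws →
      IsClosed (lamF μ t F Z ∩ {C | ∃ B ∈ Ws, car C ⊆ car B}) := by
    intro Ws hWs
    apply IsSeqClosed.isClosed
    intro C C' hmem hconv
    refine ⟨hΛclosed.isSeqClosed (fun n => (hmem n).1) hconv, ?_⟩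
    choose B hBW hBsub using fun n => (hmem n).2
    obtain ⟨B', hB'W, φ, hφ, hBconv⟩ := hWs.isSeqCompact hBW
    exact ⟨B', hB'W,
      car_subset_lim (hconv.comp hφ.tendsto_atTop) hBconv (fun n => hBsub (φ n))⟩
  have hcoverΛ : ∀ C ∈ lamF μ t F Z,
      (∃ B ∈ levelF μ t F Z ∩ u, car C ⊆ car B) ∨
      (∃ B ∈ levelF μ t F Z ∩ v, car C ⊆ car B) := by
    intro C hC
    obtain ⟨M, hM1, hM2, hM3⟩ := blockCC_ivt hμcont hμmono hZc hZconn
      (A₀ := C) hC.2.2 hC.1 htZ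
    have hML : M ∈ levelF μ t F Z := ⟨hM3, hC.2.1.trans hM1, hM2⟩
    rcases hcov hML with h | h
    · exact Or.inl ⟨M, ⟨hML, h⟩, hM1⟩
    · exact Or.inr ⟨M, ⟨hML, h⟩, hM1⟩
  obtain ⟨BH0, hBH0⟩ := hsu
  obtain ⟨BK0, hBK0⟩ := hsv
  have hBH0Λ : BH0 ∈ lamF μ t F Z := ⟨le_of_eq hBH0.1.1, hBH0.1.2⟩
  have hBK0Λ : BK0 ∈ lamF μ t F Z := ⟨le_of_eq hBK0.1.1, hBK0.1.2⟩
  obtain ⟨A₀', hA₀'⟩ := isPreconnected_closed_iff.1 hΛ _ _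
    (hupClosed _ hHc) (hupClosed _ hKc)
    (fun C hC => by
      rcases hcoverΛ C hC with h | h
      · exact Or.inl ⟨hC, h⟩
      · exact Or.inr ⟨hC, h⟩)
    ⟨BH0, hBH0Λ, hBH0Λ, BH0, hBH0, Subset.rfl⟩
    ⟨BK0, hBK0Λ, hBK0Λ, BK0, hBK0, Subset.rfl⟩
  have hWc : IsCompact ((lamF μ t F Z ∩ {C | ∃ B ∈ levelF μ t F Z ∩ u, car C ⊆ car B}) ∩
      (lamF μ t F Z ∩ {C | ∃ B ∈ levelF μ t F Z ∩ v, car C ⊆ car B})) :=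
    ((hupClosed _ hHc).inter (hupClosed _ hKc)).isCompact
  obtain ⟨A₁, hA₁W, hA₁max⟩ := hWc.exists_isMaxOn ⟨A₀', hA₀'.2⟩ hμcont.continuousOn
  have hm₁t : μ A₁ ≤ t := hA₁W.1.1.1
  obtain ⟨BH, hBH, hsubH⟩ := hA₁W.1.2
  obtain ⟨BK, hBK, hsubK⟩ := hA₁W.2.2
  have hm₁lt : μ A₁ < t := by
    rcases lt_or_eq_of_le hm₁t with h | h
    · exact h
    · exfalso
      have hABH : A₁ = BH := eq_of_sub_mu_eq hμmono hsubH (h.trans hBH.1.1.symm)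
      have hABK : A₁ = BK := eq_of_sub_mu_eq hμmono hsubK (h.trans hBK.1.1.symm)
      have hBHK : BH = BK := hABH.symm.trans hABK
      have hmem2 : BH ∈ levelF μ t F Z ∩ (u ∩ v) :=
        ⟨hBH.1, hBH.2, by rw [hBHK]; exact hBK.2⟩
      rw [hint] at hmem2
      exact hmem2
  set γ : ℝ := (t - μ A₁)/2 with hγdef
  have hγ : 0 < γ := by rw [hγdef]; linarith
  obtain ⟨ε₁, hε₁, hcont⟩ := Metric.continuous_iff.1 hμcont A₁ γ hγ
  have hBHZ : car BH ⊆ Z := hBH.1.2.2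
  have hBKZ : car BK ⊆ Z := hBK.1.2.2
  have hFA₁ : F ⊆ car A₁ := hA₁W.1.1.2.1
  obtain ⟨δH, hδH, hgrowH⟩ := growth_eps hμcont hμmono (car_compact A₁) (car_connected A₁)
    (car_compact BH) (car_connected BH) hsubH (ε := ε₁/2) (half_pos hε₁)
  obtain ⟨δK, hδK, hgrowK⟩ := growth_eps hμcont hμmono (car_compact A₁) (car_connected A₁)
    (car_compact BK) (car_connected BK) hsubK (ε := ε₁/2) (half_pos hε₁)
  rw [mkH_self A₁, mkH_self BH] at hgrowH
  rw [mkH_self A₁, mkH_self BK] at hgrowK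
  set s : ℝ := μ A₁ + (min (min δH δK) γ)/2 with hsdef
  have hmin3 : 0 < min (min δH δK) γ := lt_min (lt_min hδH hδK) hγ
  have hsgt : μ A₁ < s := by rw [hsdef]; linarith
  have hslt : s < t := by
    have h1 : min (min δH δK) γ ≤ γ := min_le_right _ _
    rw [hsdef, hγdef] at *
    linarith
  have hsH : s ≤ μ A₁ + δH := by
    have h1 : min (min δH δK) γ ≤ δH := le_trans (min_le_left _ _) (min_le_left _ _)
    rw [hsdef]; linarith
  have hsK : s ≤ μ A₁ + δK := by
    have h1 : min (min δH δK) γ ≤ δK := le_trans (min_le_left _ _) (min_le_right _ _)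
    rw [hsdef]; linarith
  obtain ⟨C, hC1, hC2, hC3, hC4⟩ := hgrowH s hsgt.le hsH (by rw [hBH.1.1]; exact hslt.le)
  obtain ⟨C', hC'1, hC'2, hC'3, hC'4⟩ := hgrowK s hsgt.le hsK (by rw [hBK.1.1]; exact hslt.le)
  have hWcomp : IsCompact (car C ∪ car C') := (car_compact C).union (car_compact C')
  have hWconn : IsConnected (car C ∪ car C') := by
    apply IsConnected.union ?_ (car_connected C) (car_connected C')
    obtain ⟨x, hx⟩ := car_nonempty A₁
    exact ⟨x, hC1 hx, hC'1 hx⟩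
  have hdistW : dist (mkH _ hWcomp hWconn) A₁ < ε₁ := by
    rw [dist_eq_hD]
    have hle : hausdorffDist (car (mkH _ hWcomp hWconn)) (car A₁) ≤ ε₁/2 := by
      apply hausdorffDist_le_of_infDist (by positivity)
      · intro x hx
        rcases (hx : x ∈ car C ∪ car C') with hx | hx
        · calc infDist x (car A₁) ≤ hausdorffDist (car C) (car A₁) :=
              infDist_le_hausdorffDist_of_mem hx (hE_ne_top (car_nonempty C) (car_nonempty A₁))
            _ = dist C A₁ := (dist_eq_hD C A₁).symm
            _ ≤ ε₁/2 := hC4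
        · calc infDist x (car A₁) ≤ hausdorffDist (car C') (car A₁) :=
              infDist_le_hausdorffDist_of_mem hx (hE_ne_top (car_nonempty C') (car_nonempty A₁))
            _ = dist C' A₁ := (dist_eq_hD C' A₁).symm
            _ ≤ ε₁/2 := hC'4
      · intro x hx
        have hxW : x ∈ car (mkH _ hWcomp hWconn) := Or.inl (hC1 hx)
        rw [infDist_zero_of_mem hxW]
        positivity
    linarith [half_lt_self hε₁]
  have hμW : μ (mkH _ hWcomp hWconn) < t := by
    have h1 := hcont _ hdistW
    rw [Real.dist_eq, abs_lt] at h1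
    rw [hγdef] at h1
    linarith [h1.2]
  have hWZ : car (mkH _ hWcomp hWconn) ⊆ Z :=
    union_subset (hC2.trans hBHZ) (hC'2.trans hBKZ)
  obtain ⟨M, hM1, hM2, hM3⟩ := blockCC_ivt hμcont hμmono hZc hZconn
    (A₀ := mkH _ hWcomp hWconn) hWZ hμW.le htZ
  have hCM : car C ⊆ car M := (subset_union_left).trans hM1
  have hC'M : car C' ⊆ car M := (subset_union_right).trans hM1
  have hML : M ∈ levelF μ t F Z := ⟨hM3, (hFA₁.trans hC1).trans hCM, hM2⟩
  have hCΛ : C ∈ lamF μ t F Z := ⟨hC3.le.trans hslt.le, hFA₁.trans hC1, hC2.trans hBHZ⟩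
  have hC'Λ : C' ∈ lamF μ t F Z := ⟨hC'3.le.trans hslt.le, hFA₁.trans hC'1, hC'2.trans hBKZ⟩
  rcases hcov hML with h | h
  · have hC'W : C' ∈ (lamF μ t F Z ∩ {C | ∃ B ∈ levelF μ t F Z ∩ u, car C ⊆ car B}) ∩
        (lamF μ t F Z ∩ {C | ∃ B ∈ levelF μ t F Z ∩ v, car C ⊆ car B}) :=
      ⟨⟨hC'Λ, M, ⟨hML, h⟩, hC'M⟩, ⟨hC'Λ, BK, hBK, hC'2⟩⟩
    have := isMaxOn_iff.1 hA₁max C' hC'W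
    rw [hC'3] at this
    linarith
  · have hCW : C ∈ (lamF μ t F Z ∩ {C | ∃ B ∈ levelF μ t F Z ∩ u, car C ⊆ car B}) ∩
        (lamF μ t F Z ∩ {C | ∃ B ∈ levelF μ t F Z ∩ v, car C ⊆ car B}) :=
      ⟨⟨hCΛ, BH, hBH, hC2⟩, ⟨hCΛ, M, ⟨hML, h⟩, hCM⟩⟩
    have := isMaxOn_iff.1 hA₁max C hCW
    rw [hC3] at this
    linarith

lemma levelF_isConnected_floor (hμcont : Continuous μ)
    (hμmono : ∀ A B : Hyperspace X, (A.1 : Set X) ⊂ (B.1 : Set X) → μ A < μ B)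
    {F Z : Set X} (hFc : IsCompact F) (hFconn : IsConnected F)
    (hZc : IsCompact Z) (hZconn : IsConnected Z) (hFZ : F ⊆ Z) {t : ℝ}
    (hFt : μ (mkH F hFc hFconn) ≤ t) (htZ : t ≤ μ (mkH Z hZc hZconn)) :
    IsConnected (levelF μ t F Z) := by
  refine ⟨?_, levelF_preconn hμcont hμmono hZc hZconn htZ
    (lamF_preconn_floor hμcont hμmono hFc hFconn hZc hZconn hFZ hFt)⟩
  obtain ⟨M, hM1, hM2, hM3⟩ := blockCC_ivt hμcont hμmono hZc hZconn
    (A₀ := mkH F hFc hFconn) hFZ hFt htZ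
  exact ⟨M, hM3, hM1, hM2⟩

lemma level_isConnected_empty (hμcont : Continuous μ)
    (hμ0 : ∀ A : Hyperspace X, (A.1 : Set X).Subsingleton → μ A = 0)
    (hμmono : ∀ A B : Hyperspace X, (A.1 : Set X) ⊂ (B.1 : Set X) → μ A < μ B)
    {Z : Set X} (hZc : IsCompact Z) (hZconn : IsConnected Z) {t : ℝ}
    (ht0 : 0 ≤ t) (htZ : t ≤ μ (mkH Z hZc hZconn)) :
    IsConnected (levelF μ t (∅ : Set X) Z) := by
  refine ⟨?_, levelF_preconn hμcont hμmono hZc hZconn htZ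
    (lam_preconn_empty hμcont hμ0 hμmono hZc hZconn ht0)⟩
  obtain ⟨z, hz⟩ := hZconn.nonempty
  have h0 : μ (sigH z) = 0 := hμ0 _ subsingleton_singleton
  obtain ⟨M, hM1, hM2, hM3⟩ := blockCC_ivt hμcont hμmono hZc hZconn
    (A₀ := sigH z) (singleton_subset_iff.2 hz) (by rw [h0]; exact ht0) htZ
  exact ⟨M, hM3, empty_subset _, hM2⟩

/-- union of a family of subcontinua -/
def famU (ℱ : Set (Hyperspace X)) : Set X := ⋃ A ∈ ℱ, car A

lemma mem_famU {ℱ : Set (Hyperspace X)} {x : X} :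
    x ∈ famU ℱ ↔ ∃ A ∈ ℱ, x ∈ car A := by simp [famU]

lemma car_subset_famU {ℱ : Set (Hyperspace X)} {A : Hyperspace X} (hA : A ∈ ℱ) :
    car A ⊆ famU ℱ :=
  subset_biUnion_of_mem hA

lemma famU_compact {ℱ : Set (Hyperspace X)} (hℱ : IsCompact ℱ) : IsCompact (famU ℱ) := by
  have hclosed : IsClosed (famU ℱ) := by
    apply IsSeqClosed.isClosed
    intro x x' hmem hconv
    choose A hAF hxA using fun n => mem_famU.1 (hmem n)
    obtain ⟨A', hA'F, φ, hφ, hAconv⟩ := hℱ.isSeqCompact hAF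
    exact mem_famU.2 ⟨A', hA'F,
      mem_car_lim hAconv (hconv.comp hφ.tendsto_atTop) (fun n => hxA (φ n))⟩
  exact hclosed.isCompact

lemma famU_connected {ℱ : Set (Hyperspace X)} (hℱ : IsConnected ℱ) :
    IsConnected (famU ℱ) := by
  obtain ⟨A₀, hA₀⟩ := hℱ.nonempty
  obtain ⟨x₀, hx₀⟩ := car_nonempty A₀
  refine ⟨⟨x₀, car_subset_famU hA₀ hx₀⟩, ?_⟩
  intro u v hu hv hcov hneu hnev
  by_contra hne
  rw [not_nonempty_iff_eq_empty] at hne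
  have hside : ∀ A ∈ ℱ, car A ⊆ u ∨ car A ⊆ v := by
    intro A hA
    have hsubuv : car A ⊆ u ∪ v := (car_subset_famU hA).trans hcov
    by_cases hcu : (car A ∩ u).Nonempty
    · by_cases hcv : (car A ∩ v).Nonempty
      · obtain ⟨y, hy⟩ := (car_connected A).isPreconnected u v hu hv hsubuv hcu hcv
        have hym : y ∈ famU ℱ ∩ (u ∩ v) := ⟨car_subset_famU hA hy.1, hy.2⟩
        rw [hne] at hym
        exact absurd hym (notMem_empty y)
      · left
        intro x hx
        rcases hsubuv hx with h | h
        · exact h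
        · exact absurd (⟨x, hx, h⟩ : (car A ∩ v).Nonempty) hcv
    · right
      intro x hx
      rcases hsubuv hx with h | h
      · exact absurd (⟨x, hx, h⟩ : (car A ∩ u).Nonempty) hcu
      · exact h
  have hsubcomplv : ∀ A ∈ ℱ, car A ⊆ u → car A ⊆ vᶜ := by
    intro A hA hAu x hx hxv
    have hxm : x ∈ famU ℱ ∩ (u ∩ v) := ⟨car_subset_famU hA hx, hAu hx, hxv⟩
    rw [hne] at hxm
    exact hxm
  have hsubcomplu : ∀ A ∈ ℱ, car A ⊆ v → car A ⊆ uᶜ := by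
    intro A hA hAv x hx hxu
    have hxm : x ∈ famU ℱ ∩ (u ∩ v) := ⟨car_subset_famU hA hx, hxu, hAv hx⟩
    rw [hne] at hxm
    exact hxm
  obtain ⟨A, hAF, hA1, hA2⟩ := isPreconnected_closed_iff.1 hℱ.isPreconnected
    {A : Hyperspace X | car A ⊆ vᶜ} {A : Hyperspace X | car A ⊆ uᶜ}
    (isClosed_carSub hv.isClosed_compl) (isClosed_carSub hu.isClosed_compl)
    (fun A hA => by
      rcases hside A hA with h | h
      · exact Or.inl (hsubcomplv A hA h)
      · exact Or.inr (hsubcomplu A hA h))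
    (by
      obtain ⟨x, hxF, hxu⟩ := hneu
      obtain ⟨A, hAF, hxA⟩ := mem_famU.1 hxF
      rcases hside A hAF with h | h
      · exact ⟨A, hAF, hsubcomplv A hAF h⟩
      · exact absurd hxu (hsubcomplu A hAF h hxA))
    (by
      obtain ⟨x, hxF, hxv⟩ := hnev
      obtain ⟨A, hAF, hxA⟩ := mem_famU.1 hxF
      rcases hside A hAF with h | h
      · exact absurd hxv (hsubcomplv A hAF h hxA)
      · exact ⟨A, hAF, hsubcomplu A hAF h⟩)
  obtain ⟨x, hx⟩ := car_nonempty A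
  rcases ((car_subset_famU hAF).trans hcov) hx with h | h
  · exact hA2 hx h
  · exact hA1 hx h

lemma preimage_val_isConnected {L s : Set (Hyperspace X)}
    (hs : IsConnected s) (hsub : s ⊆ L) :
    IsConnected (Subtype.val ⁻¹' s : Set L) := by
  have himg : Subtype.val '' (Subtype.val ⁻¹' s : Set L) = s := by
    rw [Subtype.image_preimage_coe]
    exact inter_eq_self_of_subset_right hsub
  obtain ⟨A, hA⟩ := hs.nonempty
  refine ⟨⟨⟨A, hsub hA⟩, hA⟩, ?_⟩
  apply (IsInducing.subtypeVal.isPreconnected_image).1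
  rw [himg]
  exact hs.isPreconnected

lemma preimage_val_isCompact {L s : Set (Hyperspace X)}
    (hs : IsCompact s) (hsub : s ⊆ L) :
    IsCompact (Subtype.val ⁻¹' s : Set L) := by
  rw [IsEmbedding.subtypeVal.isCompact_iff]
  have himg : Subtype.val '' (Subtype.val ⁻¹' s : Set L) = s := by
    rw [Subtype.image_preimage_coe]
    exact inter_eq_self_of_subset_right hsub
  rw [himg]
  exact hs

end Mu

end

end DSS

open DSS Set Metric in
/-- Being D** is a Whitney property: every Whitney level of a D**-continuum is a
D**-continuum. -/
theorem dStarStar_whitney_property (X : Type*) [MetricSpace X] [CompactSpace X]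
    [ConnectedSpace X] (hX : DStarStarSpace X)
    (μ : Hyperspace X → ℝ) (hμcont : Continuous μ)
    (hμ0 : ∀ A : Hyperspace X, (A.1 : Set X).Subsingleton → μ A = 0)
    (hμmono : ∀ A B : Hyperspace X, (A.1 : Set X) ⊂ (B.1 : Set X) → μ A < μ B)
    (t : ℝ) (ht0 : 0 < t)
    (httop : t < μ ⟨⟨⟨Set.univ, isCompact_univ⟩, Set.univ_nonempty⟩, isConnected_univ⟩) :
    CompactSpace {A : Hyperspace X // μ A = t} ∧
      ConnectedSpace {A : Hyperspace X // μ A = t} ∧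
      DStarStarSpace {A : Hyperspace X // μ A = t} := by
  have htuniv : t ≤ μ (mkH (univ : Set X) isCompact_univ isConnected_univ) := le_of_lt httop
  have hLclosed : IsClosed {A : Hyperspace X | μ A = t} := isClosed_eq hμcont continuous_const
  have hlevel_eq : levelF μ t (∅ : Set X) (univ : Set X) = {A : Hyperspace X | μ A = t} := by
    ext A
    simp only [levelF, blockCC, mem_inter_iff, mem_setOf_eq, empty_subset, subset_univ,
      and_true, true_and]
  have hconnL : IsConnected {A : Hyperspace X | μ A = t} := by
    rw [← hlevel_eq]
    exact level_isConnected_empty hμcont hμ0 hμmono isCompact_univ isConnected_univ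
      ht0.le htuniv
  refine ⟨isCompact_iff_compactSpace.mp hLclosed.isCompact, Subtype.connectedSpace hconnL, ?_⟩
  intro 𝒜 ℬ h𝒜c h𝒜conn h𝒜nt hℬc hℬconn hℬnt _hdisj
  set FA : Set (Hyperspace X) := Subtype.val '' 𝒜 with hFAdef
  set FB : Set (Hyperspace X) := Subtype.val '' ℬ with hFBdef
  have hFAc : IsCompact FA := h𝒜c.image continuous_subtype_val
  have hFBc : IsCompact FB := hℬc.image continuous_subtype_val
  have hFAconn : IsConnected FA := h𝒜conn.image _ continuous_subtype_val.continuousOn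
  have hFBconn : IsConnected FB := hℬconn.image _ continuous_subtype_val.continuousOn
  have hFAlevel : ∀ A ∈ FA, μ A = t := by rintro _ ⟨a, _, rfl⟩; exact a.2
  have hFBlevel : ∀ B ∈ FB, μ B = t := by rintro _ ⟨b, _, rfl⟩; exact b.2
  have hlev : ∀ {B B' : Hyperspace X}, μ B = t → μ B' = t → car B ⊆ car B' → B = B' :=
    fun hB hB' hsub => eq_of_sub_mu_eq hμmono hsub (hB.trans hB'.symm)
  have hcar_nt : ∀ A : Hyperspace X, μ A = t → (car A).Nontrivial := by
    intro A hA
    by_contra h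
    rw [Set.not_nontrivial_iff] at h
    have h2 := hμ0 A h
    rw [hA] at h2
    exact absurd h2 (ne_of_gt ht0)
  have hAstar_c : IsCompact (famU FA) := famU_compact hFAc
  have hBstar_c : IsCompact (famU FB) := famU_compact hFBc
  have hAstar_conn : IsConnected (famU FA) := famU_connected hFAconn
  have hBstar_conn : IsConnected (famU FB) := famU_connected hFBconn
  have hAstar_nt : (famU FA).Nontrivial := by
    obtain ⟨a, ha⟩ := h𝒜nt.nonempty
    exact (hcar_nt _ a.2).mono (car_subset_famU ⟨a, ha, rfl⟩)
  have hBstar_nt : (famU FB).Nontrivial := by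
    obtain ⟨b, hb⟩ := hℬnt.nonempty
    exact (hcar_nt _ b.2).mono (car_subset_famU ⟨b, hb, rfl⟩)
  -- two distinct members of FB
  obtain ⟨b₁', hb₁'ℬ, b₂', hb₂'ℬ, hb₁₂'⟩ := hℬnt
  have hB₁FB : (b₁' : Hyperspace X) ∈ FB := ⟨b₁', hb₁'ℬ, rfl⟩
  have hB₂FB : (b₂' : Hyperspace X) ∈ FB := ⟨b₂', hb₂'ℬ, rfl⟩
  have hB₁₂ : (b₁' : Hyperspace X) ≠ (b₂' : Hyperspace X) :=
    fun h => hb₁₂' (Subtype.coe_injective h)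
  have finish : ∀ 𝒞' : Set (Hyperspace X), IsConnected 𝒞' → IsClosed 𝒞' →
      (∀ A ∈ 𝒞', μ A = t) → (∃ A ∈ FA, A ∈ 𝒞') → (∃ B ∈ FB, B ∈ 𝒞') →
      (∃ b ∈ ℬ, (b : Hyperspace X) ∉ 𝒞') →
      ∃ C : Set {A : Hyperspace X // μ A = t}, IsCompact C ∧ IsConnected C ∧
        (𝒜 ∩ C).Nonempty ∧ (ℬ ∩ C).Nonempty ∧ (ℬ \ C).Nonempty := by
    intro 𝒞' hconn hclosed hsubt hA hB hmiss
    have hsub' : 𝒞' ⊆ {A : Hyperspace X | μ A = t} := fun A hA => hsubt A hA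
    refine ⟨Subtype.val ⁻¹' 𝒞', preimage_val_isCompact hclosed.isCompact hsub',
      preimage_val_isConnected hconn hsub', ?_, ?_, ?_⟩
    · obtain ⟨A, ⟨a, ha, rfl⟩, hA𝒞⟩ := hA
      exact ⟨a, ha, hA𝒞⟩
    · obtain ⟨B, ⟨b, hb, rfl⟩, hB𝒞⟩ := hB
      exact ⟨b, hb, hB𝒞⟩
    · obtain ⟨b, hb, hbv⟩ := hmiss
      exact ⟨b, hb, hbv⟩
  rcases (famU FA ∩ famU FB).eq_empty_or_nonempty with hABe | ⟨p, hpA, hpB⟩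
  · -- Case III : the unions are disjoint; use the D** property of X
    have hdisjpt : ∀ {x : X}, x ∈ famU FA → x ∈ famU FB → False := by
      intro x h1 h2
      have hm : x ∈ famU FA ∩ famU FB := ⟨h1, h2⟩
      rw [hABe] at hm
      exact hm
    obtain ⟨C, hCc, hCconn, ⟨a₀, ha₀A, ha₀C⟩, ⟨c₀, hc₀B, hc₀C⟩, ⟨b, hbB, hbC⟩⟩ :=
      hX (famU FA) (famU FB) hAstar_c hAstar_conn hAstar_nt hBstar_c hBstar_conn hBstar_nt
        (disjoint_iff_inter_eq_empty.2 hABe)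
    obtain ⟨A₀, hA₀FA, ha₀A₀⟩ := mem_famU.1 ha₀A
    obtain ⟨Bb, hBbFB, hbBb⟩ := mem_famU.1 hbB
    have hZ₁c : IsCompact (car A₀ ∪ C) := (car_compact A₀).union hCc
    have hZ₁conn : IsConnected (car A₀ ∪ C) :=
      IsConnected.union ⟨a₀, ha₀A₀, ha₀C⟩ (car_connected A₀) hCconn
    have htZ₁ : t ≤ μ (mkH _ hZ₁c hZ₁conn) := by
      have h1 := mono_le hμmono (A := A₀) (B := mkH _ hZ₁c hZ₁conn) subset_union_left
      rw [hFAlevel A₀ hA₀FA] at h1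
      exact h1
    by_cases hbr : ∃ B₀ ∈ FB, (car B₀ ∩ C).Nonempty ∧
        ∃ B₁ ∈ FB, ¬(car B₁ ⊆ (car A₀ ∪ C) ∪ car B₀)
    · obtain ⟨B₀, hB₀FB, hB₀C, B₁, hB₁FB', hB₁not⟩ := hbr
      have hZc : IsCompact ((car A₀ ∪ C) ∪ car B₀) := hZ₁c.union (car_compact B₀)
      have hZconn : IsConnected ((car A₀ ∪ C) ∪ car B₀) := by
        apply IsConnected.union ?_ hZ₁conn (car_connected B₀)
        obtain ⟨y, hy⟩ := hB₀C
        exact ⟨y, Or.inr hy.2, hy.1⟩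
      have htZ : t ≤ μ (mkH _ hZc hZconn) := by
        have h1 := mono_le hμmono (A := A₀) (B := mkH _ hZc hZconn)
          (subset_union_left.trans subset_union_left)
        rw [hFAlevel A₀ hA₀FA] at h1
        exact h1
      apply finish (levelF μ t ∅ ((car A₀ ∪ C) ∪ car B₀))
        (level_isConnected_empty hμcont hμ0 hμmono hZc hZconn ht0.le htZ)
        (isClosed_levelF hμcont ∅ hZc.isClosed) (fun A hA => hA.1)
      · exact ⟨A₀, hA₀FA, hFAlevel A₀ hA₀FA, empty_subset _,
          subset_union_left.trans subset_union_left⟩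
      · exact ⟨B₀, hB₀FB, hFBlevel B₀ hB₀FB, empty_subset _, subset_union_right⟩
      · obtain ⟨b₁, hb₁ℬ, rfl⟩ := hB₁FB'
        exact ⟨b₁, hb₁ℬ, fun hmem => hB₁not hmem.2.2⟩
    · push_neg at hbr
      obtain ⟨B₀', hB₀'FB, hc₀B₀'⟩ := mem_famU.1 hc₀B
      have hB₀'C : (car B₀' ∩ C).Nonempty := ⟨c₀, hc₀B₀', hc₀C⟩
      have f2 : ∀ B ∈ FB, (car B ∩ C).Nonempty := by
        intro B hB
        by_contra hem
        rw [not_nonempty_iff_eq_empty] at hem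
        have hsubB : car B ⊆ (car A₀ ∪ C) ∪ car B₀' := hbr B₀' hB₀'FB hB₀'C B hB
        have hBB₀' : car B ⊆ car B₀' := by
          intro x hx
          rcases hsubB hx with (h | h) | h
          · exact absurd (hdisjpt (car_subset_famU hA₀FA h) (car_subset_famU hB hx)) id
          · exfalso
            have hm : x ∈ car B ∩ C := ⟨hx, h⟩
            rw [hem] at hm
            exact hm
          · exact h
        have hBeq : B = B₀' := hlev (hFBlevel B hB) (hFBlevel B₀' hB₀'FB) hBB₀'
        rw [hBeq] at hem
        exact hB₀'C.ne_empty hem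
      have f3 : ∀ B ∈ FB, ∀ B' ∈ FB, car B \ C ⊆ car B' := by
        rintro B hB B' hB' x ⟨hxB, hxC⟩
        rcases hbr B' hB' (f2 B' hB') B hB hxB with (h | h) | h
        · exact absurd (hdisjpt (car_subset_famU hA₀FA h) (car_subset_famU hB hxB)) id
        · exact absurd h hxC
        · exact h
      have f4 : ∀ B' ∈ FB, b ∈ car B' := fun B' hB' => f3 Bb hBbFB B' hB' ⟨hbBb, hbC⟩
      have hbZ₁ : b ∉ car A₀ ∪ C := by
        rintro (h | h)
        · exact hdisjpt (car_subset_famU hA₀FA h) hbB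
        · exact hbC h
      obtain ⟨q, hqB₂, hqB₁⟩ := not_subset.1 (fun h =>
        hB₁₂ (hlev (hFBlevel _ hB₂FB) (hFBlevel _ hB₁FB) h).symm)
      have hqC : q ∈ C := by
        by_contra h
        exact hqB₁ (f3 _ hB₂FB _ hB₁FB ⟨hqB₂, h⟩)
      have hZ₂c : IsCompact ((car A₀ ∪ C) ∪ car (b₂' : Hyperspace X)) :=
        hZ₁c.union (car_compact _)
      have hZ₂conn : IsConnected ((car A₀ ∪ C) ∪ car (b₂' : Hyperspace X)) := by
        apply IsConnected.union ?_ hZ₁conn (car_connected _)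
        obtain ⟨y, hy⟩ := f2 _ hB₂FB
        exact ⟨y, Or.inr hy.2, hy.1⟩
      have htZ₂ : t ≤ μ (mkH _ hZ₂c hZ₂conn) := by
        have h1 := mono_le hμmono (A := A₀) (B := mkH _ hZ₂c hZ₂conn)
          (subset_union_left.trans subset_union_left)
        rw [hFAlevel A₀ hA₀FA] at h1
        exact h1
      have hqZ₁ : ({q} : Set X) ⊆ car A₀ ∪ C := singleton_subset_iff.2 (Or.inr hqC)
      have hμq : μ (mkH {q} isCompact_singleton isConnected_singleton) ≤ t := by
        rw [hμ0 _ subsingleton_singleton]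
        exact ht0.le
      obtain ⟨Ms, hMs⟩ := (levelF_isConnected_floor hμcont hμmono isCompact_singleton
        isConnected_singleton hZ₁c hZ₁conn hqZ₁ hμq htZ₁).nonempty
      apply finish (levelF μ t ∅ (car A₀ ∪ C) ∪
        levelF μ t {q} ((car A₀ ∪ C) ∪ car (b₂' : Hyperspace X)))
      · apply IsConnected.union
        · exact ⟨Ms, ⟨hMs.1, empty_subset _, hMs.2.2⟩,
            ⟨hMs.1, hMs.2.1, hMs.2.2.trans subset_union_left⟩⟩
        · exact level_isConnected_empty hμcont hμ0 hμmono hZ₁c hZ₁conn ht0.le htZ₁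
        · exact levelF_isConnected_floor hμcont hμmono isCompact_singleton
            isConnected_singleton hZ₂c hZ₂conn
            (singleton_subset_iff.2 (Or.inl (Or.inr hqC))) hμq htZ₂
      · exact (isClosed_levelF hμcont ∅ hZ₁c.isClosed).union
          (isClosed_levelF hμcont {q} hZ₂c.isClosed)
      · rintro A (hA | hA) <;> exact hA.1
      · exact ⟨A₀, hA₀FA, Or.inl ⟨hFAlevel A₀ hA₀FA, empty_subset _, subset_union_left⟩⟩
      · exact ⟨(b₂' : Hyperspace X), hB₂FB, Or.inr ⟨hFBlevel _ hB₂FB,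
          singleton_subset_iff.2 hqB₂, subset_union_right⟩⟩
      · refine ⟨b₁', hb₁'ℬ, ?_⟩
        rintro (hmem | hmem)
        · exact hbZ₁ (hmem.2.2 (f4 _ hB₁FB))
        · exact hqB₁ (hmem.2.1 rfl)
  · -- Case II : the unions intersect
    obtain ⟨Ap, hApFA, hpAp⟩ := mem_famU.1 hpA
    by_cases hcase1 : ∃ q, q ∈ famU FA ∩ famU FB ∧ ∃ B₁ ∈ FB, q ∉ car B₁
    · obtain ⟨q, ⟨hqA, hqB⟩, B₁, hB₁FB', hqB₁⟩ := hcase1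
      obtain ⟨Aq, hAqFA, hqAq⟩ := mem_famU.1 hqA
      obtain ⟨Bq, hBqFB, hqBq⟩ := mem_famU.1 hqB
      have hμq : μ (mkH {q} isCompact_singleton isConnected_singleton) ≤ t := by
        rw [hμ0 _ subsingleton_singleton]
        exact ht0.le
      apply finish (levelF μ t {q} univ)
        (levelF_isConnected_floor hμcont hμmono isCompact_singleton isConnected_singleton
          isCompact_univ isConnected_univ (subset_univ _) hμq htuniv)
        (isClosed_levelF hμcont {q} isClosed_univ) (fun A hA => hA.1)
      · exact ⟨Aq, hAqFA, hFAlevel Aq hAqFA, singleton_subset_iff.2 hqAq, subset_univ _⟩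
      · exact ⟨Bq, hBqFB, hFBlevel Bq hBqFB, singleton_subset_iff.2 hqBq, subset_univ _⟩
      · obtain ⟨b₁, hb₁ℬ, rfl⟩ := hB₁FB'
        exact ⟨b₁, hb₁ℬ, fun hmem => hqB₁ (hmem.2.1 rfl)⟩
    · push_neg at hcase1
      by_cases hcase2 : ∃ B₀ ∈ FB, ∃ B₁ ∈ FB, ¬(car B₁ ⊆ car Ap ∪ car B₀)
      · obtain ⟨B₀, hB₀FB, B₁, hB₁FB', hnot⟩ := hcase2
        have hpB₀ : p ∈ car B₀ := hcase1 p ⟨hpA, hpB⟩ B₀ hB₀FB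
        have hZc : IsCompact (car Ap ∪ car B₀) := (car_compact Ap).union (car_compact B₀)
        have hZconn : IsConnected (car Ap ∪ car B₀) :=
          IsConnected.union ⟨p, hpAp, hpB₀⟩ (car_connected Ap) (car_connected B₀)
        have htZ : t ≤ μ (mkH _ hZc hZconn) := by
          have h1 := mono_le hμmono (A := Ap) (B := mkH _ hZc hZconn) subset_union_left
          rw [hFAlevel Ap hApFA] at h1
          exact h1
        apply finish (levelF μ t ∅ (car Ap ∪ car B₀))
          (level_isConnected_empty hμcont hμ0 hμmono hZc hZconn ht0.le htZ)
          (isClosed_levelF hμcont ∅ hZc.isClosed) (fun A hA => hA.1)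
        · exact ⟨Ap, hApFA, hFAlevel Ap hApFA, empty_subset _, subset_union_left⟩
        · exact ⟨B₀, hB₀FB, hFBlevel B₀ hB₀FB, empty_subset _, subset_union_right⟩
        · obtain ⟨b₁, hb₁ℬ, rfl⟩ := hB₁FB'
          exact ⟨b₁, hb₁ℬ, fun hmem => hnot hmem.2.2⟩
      · exfalso
        push_neg at hcase2
        obtain ⟨q', hq'B₂, hq'B₁⟩ := not_subset.1 (fun h =>
          hB₁₂ (hlev (hFBlevel _ hB₂FB) (hFBlevel _ hB₁FB) h).symm)
        have hq'Ap : q' ∈ car Ap := by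
          rcases hcase2 _ hB₁FB _ hB₂FB hq'B₂ with h | h
          · exact h
          · exact absurd h hq'B₁
        exact hq'B₁ (hcase1 q' ⟨car_subset_famU hApFA hq'Ap,
          car_subset_famU hB₂FB hq'B₂⟩ _ hB₁FB)
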